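/- For each k ≥ 1, the graph S_k is a bichain graph: in each part of its bipartition the vertices can be partitioned into two chains (sets whose neighbourhoods are linearly ordered by inclusion); specifically, in each part of S_k the odd-indexed vertices form a chain and the even-indexed vertices form a chain. -/

import Mathlib

def SAdj (k : ℕ) : (Fin k ⊕ Fin k) → (Fin k ⊕ Fin k) → Prop
  | Sum.inl i, Sum.inr j => j.val = i.val ∨ i.val + 2 ≤ j.val
  | Sum.inr j, Sum.inl i => j.val = i.val ∨ i.val + 2 ≤ j.val
  | _, _ => False

/-- The graph `S_k`: vertices `Sum.inl i` are the `x_{i+1}` and `Sum.inr j`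
are the `y_{j+1}` (0-indexed), with `x_i ~ y_j` iff `j = i` or `j ≥ i + 2`. -/
def SG (k : ℕ) : SimpleGraph (Fin k ⊕ Fin k) where
  Adj := SAdj k
  symm := by constructor; rintro (i|i) (j|j) h <;> simp_all [SAdj]
  loopless := by constructor; rintro (i|i) h <;> simp_all [SAdj]

/-- `S_k` is a bichain graph: within each part of its
bipartition, the vertices whose (1-based) indices have the same parity have
neighbourhoods linearly ordered by inclusion — the odd-indexed vertices form
a chain, as do the even-indexed vertices. -/
theorem Sk_bichain (k : ℕ) (hk : 1 ≤ k) :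
    ∀ i j : Fin k, (i : ℕ) % 2 = (j : ℕ) % 2 →
      ((SG k).neighborSet (Sum.inl i) ⊆ (SG k).neighborSet (Sum.inl j) ∨
       (SG k).neighborSet (Sum.inl j) ⊆ (SG k).neighborSet (Sum.inl i)) ∧
      ((SG k).neighborSet (Sum.inr i) ⊆ (SG k).neighborSet (Sum.inr j) ∨
       (SG k).neighborSet (Sum.inr j) ⊆ (SG k).neighborSet (Sum.inr i)) := by
  have key : ∀ i j : Fin k, ((i : ℕ) = j ∨ (i : ℕ) + 2 ≤ j) →
      (SG k).neighborSet (Sum.inl j) ⊆ (SG k).neighborSet (Sum.inl i) ∧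
      (SG k).neighborSet (Sum.inr i) ⊆ (SG k).neighborSet (Sum.inr j) := by
    intro i j hij
    constructor
    · rintro (t | t) ht <;>
        simp_all [SimpleGraph.neighborSet, SG, SAdj] <;> omega
    · rintro (t | t) ht <;>
        simp_all [SimpleGraph.neighborSet, SG, SAdj] <;> omega
  intro i j hpar
  rcases le_total (i : ℕ) (j : ℕ) with h | h
  · have := key i j (by omega)
    exact ⟨Or.inr this.1, Or.inl this.2⟩
  · have := key j i (by omega)
    exact ⟨Or.inl this.1, Or.inr this.2⟩
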